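/- arXiv:1010.5716 — 2 statements merged into one kernel-verified Lean document; each statement's English description precedes it below -/
import Mathlib

section
/- Let G = (A ∪ B, E) be a bipartite graph with |A| = n and |B| = m containing no complete bipartite subgraph K_{r,s} with the r vertices in A and the s vertices in B. Then |E| ≤ (s-1)^{1/r} · n · m^{1-1/r} + (r-1)·m. -/
/-- Kővári–Sós–Turán: a bipartite graph with parts `A` (size `n`) and `B` (size `m`)
with no `K_{r,s}` (the `r` vertices in `A`, the `s` vertices in `B`) has at most
`(s-1)^(1/r) * n * m^(1-1/r) + (r-1) * m` edges. -/
theorem kovari_sos_turan {α β : Type*} [DecidableEq α] [DecidableEq β]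
    (A : Finset α) (B : Finset β) (E : Finset (α × β)) (n m r s : ℕ)
    (hA : A.card = n) (hB : B.card = m)
    (hE : ∀ e ∈ E, e.1 ∈ A ∧ e.2 ∈ B)
    (hr : 1 ≤ r) (hs : 1 ≤ s)
    (hKrs : ¬ ∃ (R : Finset α) (S : Finset β), R ⊆ A ∧ S ⊆ B ∧ R.card = r ∧ S.card = s ∧
      ∀ a ∈ R, ∀ b ∈ S, (a, b) ∈ E) :
    (E.card : ℝ) ≤ ((s : ℝ) - 1) ^ ((1 : ℝ) / r) * n * (m : ℝ) ^ (1 - (1 : ℝ) / r)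
      + ((r : ℝ) - 1) * m := by
  classical
  set N : β → Finset α := fun b => A.filter fun a => (a, b) ∈ E with hN
  set d : β → ℕ := fun b => (N b).card with hd
  have hr0 : (r : ℝ) ≠ 0 := by positivity
  have hs1 : (0:ℝ) ≤ (s:ℝ) - 1 := by
    rw [sub_nonneg]; exact_mod_cast hs
  have hcs : ((s - 1 : ℕ) : ℝ) = (s : ℝ) - 1 := by
    push_cast [Nat.cast_sub hs]; ring
  have hcr : ((r - 1 : ℕ) : ℝ) = (r : ℝ) - 1 := by
    push_cast [Nat.cast_sub hr]; ring
  -- Step A : E.card = ∑ b in B, d b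
  have stepA : E.card = ∑ b ∈ B, d b := by
    rw [Finset.card_eq_sum_card_fiberwise (f := Prod.snd) (fun e he => (hE e he).2)]
    refine Finset.sum_congr rfl fun b hb => ?_
    refine Finset.card_bij (fun e _ => e.1) ?_ ?_ ?_
    · intro e he
      simp only [Finset.mem_filter] at he
      simp only [hN, Finset.mem_filter]
      obtain ⟨he1, he2⟩ := he
      refine ⟨(hE e he1).1, ?_⟩
      rw [← he2]
      simpa using he1
    · intro e1 h1 e2 h2 h
      simp only [Finset.mem_filter] at h1 h2
      exact Prod.ext h (h1.2.trans h2.2.symm)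
    · intro a ha
      simp only [hN, Finset.mem_filter] at ha
      exact ⟨(a, b), by simp [ha.2], rfl⟩
  -- Step B : ∑ b in B, (d b).choose r ≤ (s-1) * n.choose r
  have stepB : ∑ b ∈ B, (d b).choose r ≤ (s - 1) * n.choose r := by
    have key : ∀ b, (d b).choose r = ((A.powersetCard r).filter fun R => R ⊆ N b).card := by
      intro b
      rw [← Finset.card_powersetCard]
      congr 1
      ext R
      simp only [Finset.mem_filter, Finset.mem_powersetCard]
      constructor
      · rintro ⟨hRN, hRc⟩
        exact ⟨⟨hRN.trans (Finset.filter_subset _ _), hRc⟩, hRN⟩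
      · rintro ⟨⟨_, hRc⟩, hRN⟩
        exact ⟨hRN, hRc⟩
    have bound : ∀ R ∈ A.powersetCard r, (B.filter fun b => R ⊆ N b).card ≤ s - 1 := by
      intro R hR
      by_contra hc
      have hsc : s ≤ (B.filter fun b => R ⊆ N b).card := by omega
      obtain ⟨S, hSsub, hScard⟩ := Finset.exists_subset_card_eq hsc
      rw [Finset.mem_powersetCard] at hR
      exact hKrs ⟨R, S, hR.1, hSsub.trans (Finset.filter_subset _ _), hR.2, hScard,
        fun a ha b hb => by
          have := hSsub hb
          rw [Finset.mem_filter] at this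
          have := this.2 ha
          simp only [hN, Finset.mem_filter] at this
          exact this.2⟩
    calc ∑ b ∈ B, (d b).choose r
        = ∑ b ∈ B, ∑ R ∈ A.powersetCard r, if R ⊆ N b then 1 else 0 := by
          refine Finset.sum_congr rfl fun b _ => ?_
          rw [key b, Finset.card_filter]
      _ = ∑ R ∈ A.powersetCard r, ∑ b ∈ B, if R ⊆ N b then 1 else 0 := Finset.sum_comm
      _ = ∑ R ∈ A.powersetCard r, (B.filter fun b => R ⊆ N b).card := by
          refine Finset.sum_congr rfl fun R _ => (Finset.card_filter _ _).symm
      _ ≤ ∑ _R ∈ A.powersetCard r, (s - 1) := Finset.sum_le_sum bound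
      _ = n.choose r * (s - 1) := by
          rw [Finset.sum_const, smul_eq_mul, Finset.card_powersetCard, hA]
      _ = (s - 1) * n.choose r := mul_comm _ _
  -- Step C : ∑ b in B, (d b - (r-1))^r ≤ (s-1) * n^r  (in ℕ)
  have stepC : ∑ b ∈ B, (d b - (r - 1)) ^ r ≤ (s - 1) * n ^ r := by
    have h1 : ∀ b, (d b - (r - 1)) ^ r ≤ r.factorial * (d b).choose r := by
      intro b
      rw [← Nat.descFactorial_eq_factorial_mul_choose, Nat.descFactorial_eq_prod_range]
      calc (d b - (r - 1)) ^ r = ∏ _i ∈ Finset.range r, (d b - (r - 1)) := by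
            rw [Finset.prod_const, Finset.card_range]
        _ ≤ ∏ i ∈ Finset.range r, (d b - i) :=
            Finset.prod_le_prod' fun i hi => by
              have : i ≤ r - 1 := by
                rw [Finset.mem_range] at hi; omega
              exact Nat.sub_le_sub_left this _
    calc ∑ b ∈ B, (d b - (r - 1)) ^ r
        ≤ ∑ b ∈ B, r.factorial * (d b).choose r := Finset.sum_le_sum fun b _ => h1 b
      _ = r.factorial * ∑ b ∈ B, (d b).choose r := (Finset.mul_sum _ _ _).symm
      _ ≤ r.factorial * ((s - 1) * n.choose r) := Nat.mul_le_mul_left _ stepB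
      _ = (s - 1) * (r.factorial * n.choose r) := by ring
      _ = (s - 1) * n.descFactorial r := by rw [Nat.descFactorial_eq_factorial_mul_choose]
      _ ≤ (s - 1) * n ^ r := Nat.mul_le_mul_left _ (Nat.descFactorial_le_pow _ _)
  -- trivial case m = 0
  rcases Nat.eq_zero_or_pos m with hm0 | hm
  · have hBe : B = ∅ := Finset.card_eq_zero.mp (hB.trans hm0)
    have : E.card = 0 := by rw [stepA, hBe, Finset.sum_empty]
    rw [this, hm0]
    push_cast
    have : (0:ℝ) ≤ ((s : ℝ) - 1) ^ ((1 : ℝ) / r) * n * (0:ℝ) ^ (1 - (1 : ℝ) / r) := by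
      apply mul_nonneg (mul_nonneg (Real.rpow_nonneg hs1 _) (by positivity))
      exact Real.rpow_nonneg le_rfl _
    linarith
  -- main case
  have hmR : (0:ℝ) < m := by exact_mod_cast hm
  set x : β → ℝ := fun b => ((d b - (r - 1) : ℕ) : ℝ) with hx
  set X : ℝ := ∑ b ∈ B, x b with hX
  have hXnn : 0 ≤ X := Finset.sum_nonneg fun b _ => Nat.cast_nonneg _
  have hxpow : ∑ b ∈ B, x b ^ r ≤ ((s:ℝ) - 1) * (n:ℝ) ^ r := by
    rw [← hcs]
    simp only [hx]
    exact_mod_cast stepC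
  have hpowsum : X ^ r / (m:ℝ) ^ (r - 1) ≤ ∑ b ∈ B, x b ^ r := by
    have := pow_sum_div_card_le_sum_pow (s := B) (f := x)
      (fun b _ => Nat.cast_nonneg _) (r - 1)
    rw [hB] at this
    rwa [Nat.sub_add_cancel hr] at this
  have hXr : X ^ r ≤ ((s:ℝ) - 1) * (n:ℝ) ^ r * (m:ℝ) ^ (r - 1) := by
    rw [← div_le_iff₀ (by positivity)]
    exact hpowsum.trans hxpow
  -- take r-th root
  have hXle : X ≤ ((s:ℝ) - 1) ^ ((1:ℝ)/r) * n * (m:ℝ) ^ (1 - (1:ℝ)/r) := by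
    have h1r : (0:ℝ) ≤ 1 / r := by positivity
    have hrr : (r:ℝ) * (1/r) = 1 := mul_one_div_cancel hr0
    have hmono := Real.rpow_le_rpow (by positivity) hXr h1r
    have hL : (X ^ r) ^ ((1:ℝ)/r) = X := by
      rw [← Real.rpow_natCast X r, ← Real.rpow_mul hXnn, hrr, Real.rpow_one]
    have hR : (((s:ℝ) - 1) * (n:ℝ) ^ r * (m:ℝ) ^ (r - 1)) ^ ((1:ℝ)/r)
        = ((s:ℝ) - 1) ^ ((1:ℝ)/r) * n * (m:ℝ) ^ (1 - (1:ℝ)/r) := by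
      rw [Real.mul_rpow (by positivity) (by positivity),
        Real.mul_rpow hs1 (by positivity)]
      congr 1
      · congr 1
        rw [← Real.rpow_natCast (n:ℝ) r, ← Real.rpow_mul (by positivity), hrr, Real.rpow_one]
      · rw [← Real.rpow_natCast (m:ℝ) (r-1), ← Real.rpow_mul (by positivity), hcr]
        congr 1
        field_simp
    rwa [hL, hR] at hmono
  -- conclude
  have hfinal : (E.card : ℝ) ≤ X + ((r:ℝ) - 1) * m := by
    rw [stepA]
    push_cast
    calc ∑ b ∈ B, (d b : ℝ)
        ≤ ∑ b ∈ B, (x b + ((r:ℝ) - 1)) := by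
          refine Finset.sum_le_sum fun b _ => ?_
          simp only [hx, ← hcr]
          have : d b ≤ d b - (r - 1) + (r - 1) := le_tsub_add
          exact_mod_cast this
      _ = X + ((r:ℝ) - 1) * m := by
          rw [Finset.sum_add_distrib, ← hX, Finset.sum_const, hB, nsmul_eq_mul]
          ring
  linarith
end

section
/- Let x_1, ..., x_k, y_1, ..., y_k, z_1, ..., z_k be 3k points in convex position in the plane appearing in this clockwise order on their convex hull. Then the k triangles T_i = conv{x_i, y_i, z_i} (i = 1, ..., k) have a common point. -/
open Finset

/-- Twice the signed area of the triangle `u v t`. -/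
def Dt (u v t : ℝ × ℝ) : ℝ := (v.1 - u.1) * (t.2 - u.2) - (v.2 - u.2) * (t.1 - u.1)

lemma Dt_cyc (u v t : ℝ × ℝ) : Dt u v t = Dt t u v := by simp only [Dt]; ring

lemma Dt_self₁ (u v : ℝ × ℝ) : Dt u v u = 0 := by simp only [Dt]; ring

lemma Dt_self₂ (u v : ℝ × ℝ) : Dt u v v = 0 := by simp only [Dt]; ring

lemma convex_Dt (u v : ℝ × ℝ) : Convex ℝ {p : ℝ × ℝ | Dt u v p ≤ 0} := by
  intro x hx y hy a b ha hb hab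
  simp only [Set.mem_setOf_eq] at hx hy ⊢
  have hb' : b = 1 - a := by linarith
  subst hb'
  have hkey : Dt u v (a • x + (1 - a) • y) = a * Dt u v x + (1 - a) * Dt u v y := by
    simp [Dt, Prod.smul_fst, Prod.smul_snd, smul_eq_mul]; ring
  rw [hkey]
  have h1 : a * Dt u v x ≤ 0 := mul_nonpos_of_nonneg_of_nonpos ha hx
  have h2 : (1 - a) * Dt u v y ≤ 0 := mul_nonpos_of_nonneg_of_nonpos (by linarith) hy
  linarith

set_option maxHeartbeats 1600000 in
lemma mem_tri {A B C p : ℝ × ℝ} (hABC : Dt A B C < 0)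
    (h1 : Dt A B p ≤ 0) (h2 : Dt B C p ≤ 0) (h3 : Dt C A p ≤ 0) :
    p ∈ convexHull ℝ ({A, B, C} : Set (ℝ × ℝ)) := by
  set u : ℝ := -(Dt B C p) with hu
  set v : ℝ := -(Dt C A p) with hv
  set t : ℝ := -(Dt A B p) with ht
  have hsum : u + v + t = -(Dt A B C) := by simp only [hu, hv, ht, Dt]; ring
  have hs : (0:ℝ) < u + v + t := by rw [hsum]; linarith
  have hx : u * A.1 + v * B.1 + t * C.1 = (u + v + t) * p.1 := by
    rw [hsum]; simp only [hu, hv, ht, Dt]; ring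
  have hy : u * A.2 + v * B.2 + t * C.2 = (u + v + t) * p.2 := by
    rw [hsum]; simp only [hu, hv, ht, Dt]; ring
  have hmem := Finset.centerMass_mem_convexHull (univ : Finset (Fin 3))
    (w := ![u, v, t]) (z := ![A, B, C]) (s := ({A, B, C} : Set (ℝ × ℝ)))
    (fun i _ => by
      fin_cases i <;> simp [hu, hv, ht] <;> linarith)
    (by simpa [Fin.sum_univ_three] using hs)
    (fun i _ => by fin_cases i <;> simp)
  have hcm : (univ : Finset (Fin 3)).centerMass ![u, v, t] ![A, B, C] = p := by
    rw [Finset.centerMass]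
    simp only [Fin.sum_univ_three, Matrix.cons_val_zero, Matrix.cons_val_one, Matrix.head_cons,
      Matrix.cons_val_two, Matrix.tail_cons]
    have hne : u + v + t ≠ 0 := ne_of_gt hs
    apply Prod.ext
    · simp only [Prod.smul_fst, Prod.fst_add, smul_eq_mul]
      field_simp
      linarith [hx]
    · simp only [Prod.smul_snd, Prod.snd_add, smul_eq_mul]
      field_simp
      linarith [hy]
  rwa [hcm] at hmem

set_option maxHeartbeats 1600000 in
/-- If `3k` points `w 0, …, w (3k−1)` appear in clockwise convex position (every triple
in listed order is oriented clockwise), then the `k` triangles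
`conv{w i, w (k+i), w (2k+i)}` have a common point. -/
theorem convex_position_triangles_intersect (k : ℕ) (hk : 0 < k)
    (w : Fin (3 * k) → ℝ × ℝ)
    (hcw : ∀ i j l : Fin (3 * k), i < j → j < l →
      ((w j).1 - (w i).1) * ((w l).2 - (w i).2)
        - ((w j).2 - (w i).2) * ((w l).1 - (w i).1) < 0) :
    ∃ p : ℝ × ℝ, ∀ i : Fin k,
      p ∈ convexHull ℝ ({w ⟨i.1, by omega⟩, w ⟨k + i.1, by omega⟩,
        w ⟨2 * k + i.1, by omega⟩} : Set (ℝ × ℝ)) := by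
  classical
  have hcw' : ∀ i j l : Fin (3 * k), i < j → j < l → Dt (w i) (w j) (w l) < 0 := by
    intro i j l hij hjl
    simpa [Dt] using hcw i j l hij hjl
  have h3k : 0 < 3 * k := by omega
  -- successor at distance `k` (kept opaque to avoid definitional unfolding)
  obtain ⟨nxt, hnxt₁, hnxt₂⟩ :
      ∃ nxt : Fin (3 * k) → Fin (3 * k),
        (∀ a : Fin (3 * k), a.1 + k < 3 * k → (nxt a).1 = a.1 + k) ∧
        (∀ a : Fin (3 * k), ¬ a.1 + k < 3 * k → (nxt a).1 = a.1 + k - 3 * k) := by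
    refine ⟨fun a => if h : a.1 + k < 3 * k then ⟨a.1 + k, h⟩
      else ⟨a.1 + k - 3 * k, by omega⟩, fun a h => ?_, fun a h => ?_⟩
    · simp [h]
    · simp [h]
  -- halfplane family
  let F : Fin (3 * k) → Set (ℝ × ℝ) := fun a => {p | Dt (w a) (w (nxt a)) p ≤ 0}
  -- bad (violating) vertices for each constraint
  let badP : Fin (3 * k) → Fin (3 * k) → Prop := fun a m =>
    if a.1 + k < 3 * k then a.1 < m.1 ∧ m.1 < a.1 + k
    else (m.1 + 3 * k < a.1 + k ∨ a.1 < m.1)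
  -- a vertex which is not bad satisfies the constraint
  have hsat : ∀ a m : Fin (3 * k), ¬ badP a m → w m ∈ F a := by
    intro a m hbad
    simp only [F, Set.mem_setOf_eq]
    by_cases hc : a.1 + k < 3 * k
    · simp only [badP, if_pos hc] at hbad
      push_neg at hbad
      have hval : (nxt a).1 = a.1 + k := hnxt₁ a hc
      rcases lt_trichotomy m.1 a.1 with h | h | h
      · have hlt1 : m < a := by rw [Fin.lt_def]; omega
        have hlt2 : a < nxt a := by rw [Fin.lt_def, hval]; omega
        have := hcw' m a (nxt a) hlt1 hlt2
        rw [Dt_cyc]; linarith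
      · have : m = a := Fin.ext h
        subst this; rw [Dt_self₁]
      · rcases lt_or_ge m.1 (a.1 + k) with h2 | h2
        · omega
        · rcases eq_or_lt_of_le h2 with h3 | h3
          · have : m = nxt a := Fin.ext (by omega)
            subst this; rw [Dt_self₂]
          · have hlt1 : a < nxt a := by rw [Fin.lt_def, hval]; omega
            have hlt2 : nxt a < m := by rw [Fin.lt_def, hval]; omega
            have := hcw' a (nxt a) m hlt1 hlt2
            linarith
    · simp only [badP, if_neg hc] at hbad
      push_neg at hbad
      obtain ⟨hb1, hb2⟩ := hbad
      have hval : (nxt a).1 = a.1 + k - 3 * k := hnxt₂ a hc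
      rcases lt_trichotomy (nxt a).1 m.1 with h | h | h
      · rcases lt_trichotomy m.1 a.1 with h2 | h2 | h2
        · have hlt1 : nxt a < m := by rw [Fin.lt_def]; omega
          have hlt2 : m < a := by rw [Fin.lt_def]; omega
          have := hcw' (nxt a) m a hlt1 hlt2
          rw [Dt_cyc, Dt_cyc]; linarith
        · have : m = a := Fin.ext h2
          subst this; rw [Dt_self₁]
        · omega
      · have : m = nxt a := Fin.ext h.symm
        subst this; rw [Dt_self₂]
      · omega
  let bad : Fin (3 * k) → Finset (Fin (3 * k)) := fun a => univ.filter (badP a)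
  have hbadcard : ∀ a : Fin (3 * k), (bad a).card + 1 ≤ k := by
    intro a
    by_cases hc : a.1 + k < 3 * k
    · have hsub : (bad a).card ≤ (Finset.Ioo a.1 (a.1 + k)).card := by
        apply Finset.card_le_card_of_injOn Fin.val
        · intro m hm
          simp only [bad, badP, Finset.mem_coe, mem_filter, if_pos hc] at hm
          simp only [Finset.mem_coe, Finset.mem_Ioo]
          exact hm.2
        · exact fun x _ y _ h => Fin.ext h
      rw [Nat.card_Ioo] at hsub
      omega
    · have hsub : (bad a).card ≤
          (Finset.range (a.1 + k - 3 * k) ∪ Finset.Ioo a.1 (3 * k)).card := by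
        apply Finset.card_le_card_of_injOn Fin.val
        · intro m hm
          simp only [bad, badP, Finset.mem_coe, mem_filter, if_neg hc] at hm
          simp only [Finset.mem_coe, Finset.mem_union, Finset.mem_range, Finset.mem_Ioo]
          rcases hm.2 with h | h
          · left; omega
          · right; exact ⟨h, m.2⟩
        · exact fun x _ y _ h => Fin.ext h
      have hcard := Finset.card_union_le (Finset.range (a.1 + k - 3 * k))
        (Finset.Ioo a.1 (3 * k))
      rw [Finset.card_range, Nat.card_Ioo] at hcard
      have ha3 : a.1 < 3 * k := a.2
      omega
  -- Helly's theorem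
  have hhelly : (⋂ a ∈ (univ : Finset (Fin (3 * k))), F a).Nonempty := by
    apply Convex.helly_theorem' (𝕜 := ℝ)
    · intro a _
      exact convex_Dt _ _
    · intro I _ hIcard
      have hrank : Module.finrank ℝ (ℝ × ℝ) = 2 := by
        simp [Module.finrank_prod]
      rw [hrank] at hIcard
      -- find a vertex avoiding all bad sets of constraints in I
      have hbig : (I.biUnion bad).card < 3 * k := by
        calc (I.biUnion bad).card ≤ ∑ a ∈ I, (bad a).card := Finset.card_biUnion_le
          _ ≤ ∑ _a ∈ I, (k - 1) := Finset.sum_le_sum (fun a _ => by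
              have := hbadcard a; omega)
          _ = I.card * (k - 1) := by rw [Finset.sum_const, smul_eq_mul]
          _ ≤ 3 * (k - 1) := Nat.mul_le_mul_right _ hIcard
          _ < 3 * k := by omega
      have hex : ∃ m : Fin (3 * k), m ∉ I.biUnion bad := by
        by_contra hcon
        push_neg at hcon
        have hss : (univ : Finset (Fin (3 * k))) ⊆ I.biUnion bad := fun m _ => hcon m
        have := Finset.card_le_card hss
        rw [Finset.card_univ, Fintype.card_fin] at this
        omega
      obtain ⟨m, hm⟩ := hex
      refine ⟨w m, ?_⟩
      rw [Set.mem_iInter₂]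
      intro a ha
      apply hsat
      intro hb
      exact hm (Finset.mem_biUnion.mpr ⟨a, ha, by simp [bad, hb]⟩)
  obtain ⟨p, hp⟩ := hhelly
  rw [Set.mem_iInter₂] at hp
  refine ⟨p, fun i => ?_⟩
  have hik : i.1 < k := i.2
  have ha : nxt ⟨i.1, by omega⟩ = ⟨k + i.1, by omega⟩ := by
    apply Fin.ext
    rw [hnxt₁ ⟨i.1, by omega⟩ (show (i.1 : ℕ) + k < 3 * k by omega)]
    show i.1 + k = k + i.1
    omega
  have hb : nxt ⟨k + i.1, by omega⟩ = ⟨2 * k + i.1, by omega⟩ := by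
    apply Fin.ext
    rw [hnxt₁ ⟨k + i.1, by omega⟩ (show (k + i.1 : ℕ) + k < 3 * k by omega)]
    show k + i.1 + k = 2 * k + i.1
    omega
  have hcn : nxt ⟨2 * k + i.1, by omega⟩ = ⟨i.1, by omega⟩ :=
    Fin.ext ((hnxt₂ ⟨2 * k + i.1, by omega⟩
        (show ¬ ((2 * k + i.1 : ℕ) + k < 3 * k) by omega)).trans
      (show (2 * k + i.1 : ℕ) + k - 3 * k = i.1 by omega))
  have h1 := hp ⟨i.1, by omega⟩ (Finset.mem_univ _)
  have h2 := hp ⟨k + i.1, by omega⟩ (Finset.mem_univ _)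
  have h3 := hp ⟨2 * k + i.1, by omega⟩ (Finset.mem_univ _)
  simp only [F, Set.mem_setOf_eq] at h1 h2 h3
  simp only [ha] at h1
  simp only [hb] at h2
  simp only [hcn] at h3
  have hABC : Dt (w ⟨i.1, by omega⟩) (w ⟨k + i.1, by omega⟩) (w ⟨2 * k + i.1, by omega⟩) < 0 :=
    hcw' _ _ _ (Fin.mk_lt_mk.mpr (by omega)) (Fin.mk_lt_mk.mpr (by omega))
  exact mem_tri hABC h1 h2 h3
end
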